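/- Let K : ℝ → ℝ be continuous and bounded, and suppose that for each n there is a solution U_n of the Riccati equation U' + U² + K = 0 defined on (t_n, ∞) with U_n(t) > 0 for all t > t_n, where t_n → -∞. Suppose moreover there is a uniform bound: for each a > 0 there is C > 0 with |U_n(t)| < C for all t ≥ t_n + a and all n. Then there exists a solution U of the Riccati equation defined on all of ℝ with U(t) ≥ 0 for all t ∈ ℝ. -/

import Mathlib

open Filter Set intervalIntegral MeasureTheory
open scoped NNReal Topology

theorem my_exists_monotone_subseq (f : ℕ → ℝ) :
    ∃ φ : ℕ → ℕ, StrictMono φ ∧ (Monotone (f ∘ φ) ∨ Antitone (f ∘ φ)) := by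
  by_cases h : ∀ N : ℕ, ∃ n, N ≤ n ∧ ∀ m, n < m → f m ≤ f n
  · choose g hg1 hg2 using h
    set φ : ℕ → ℕ := fun k => (fun x => g (x + 1))^[k] (g 0) with hφ
    have hstep : ∀ k, φ (k + 1) = g (φ k + 1) := by
      intro k; exact Function.iterate_succ_apply' _ _ _
    have hmono : StrictMono φ := strictMono_nat_of_lt_succ (by
      intro k; rw [hstep]
      exact lt_of_lt_of_le (Nat.lt_succ_self _) (hg1 _))
    refine ⟨φ, hmono, Or.inr (antitone_nat_of_succ_le ?_)⟩
    intro k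
    have hpeak : ∀ m, φ k < m → f m ≤ f (φ k) := by
      cases k with
      | zero => exact hg2 0
      | succ j => rw [hstep]; exact hg2 _
    exact hpeak _ (hmono (Nat.lt_succ_self k))
  · push_neg at h
    obtain ⟨N, hN⟩ := h
    choose! g hg1 hg2 using hN
    set φ : ℕ → ℕ := fun k => (fun x => g x)^[k] N with hφ
    have hstep : ∀ k, φ (k + 1) = g (φ k) := by
      intro k; exact Function.iterate_succ_apply' _ _ _
    have hNle : ∀ k, N ≤ φ k := by
      intro k; induction k with
      | zero => exact le_refl N
      | succ j ih => rw [hstep]; exact le_trans ih (le_of_lt (hg1 _ ih))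
    have hmono : StrictMono φ := strictMono_nat_of_lt_succ (by
      intro k; rw [hstep]; exact hg1 _ (hNle k))
    refine ⟨φ, hmono, Or.inl (monotone_nat_of_le_succ ?_)⟩
    intro k
    simp only [Function.comp_apply, hstep]
    exact le_of_lt (hg2 _ (hNle k))

/-- Lipschitz bound for the Riccati vector field on a ball. -/
theorem my_riccati_lipschitz (K : ℝ → ℝ) (C : ℝ) (hC : 0 ≤ C) (t : ℝ) :
    LipschitzOnWith (Real.toNNReal (2 * C)) (fun x : ℝ => -x ^ 2 - K t)
      (Icc (-C) C) := by
  apply LipschitzOnWith.of_dist_le_mul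
  intro x hx y hy
  have h2C : ((Real.toNNReal (2 * C) : ℝ≥0) : ℝ) = 2 * C :=
    Real.coe_toNNReal _ (by linarith)
  rw [Real.dist_eq, Real.dist_eq, h2C]
  have : -x ^ 2 - K t - (-y ^ 2 - K t) = (y + x) * (y - x) := by ring
  rw [this, abs_mul]
  have hxy : |y + x| ≤ 2 * C := by
    have h1 : |x| ≤ C := abs_le.mpr ⟨hx.1, hx.2⟩
    have h2 : |y| ≤ C := abs_le.mpr ⟨hy.1, hy.2⟩
    calc |y + x| ≤ |y| + |x| := abs_add_le _ _
      _ ≤ 2 * C := by linarith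
  have : |y - x| = |x - y| := abs_sub_comm _ _
  rw [this]
  exact mul_le_mul_of_nonneg_right hxy (abs_nonneg _)

theorem stmt_18 (K : ℝ → ℝ) (hKc : Continuous K) (hKb : ∃ B, ∀ t, |K t| ≤ B)
    (tseq : ℕ → ℝ) (htseq : Tendsto tseq atTop atBot)
    (U : ℕ → ℝ → ℝ)
    (hU : ∀ n, ∀ t, tseq n < t → HasDerivAt (U n) (-(U n t) ^ 2 - K t) t)
    (hUpos : ∀ n, ∀ t, tseq n < t → 0 < U n t)
    (hbound : ∀ a : ℝ, 0 < a → ∃ C : ℝ, 0 < C ∧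
      ∀ n, ∀ t, tseq n + a ≤ t → |U n t| < C) :
    ∃ V : ℝ → ℝ, (∀ t, HasDerivAt V (-(V t) ^ 2 - K t) t) ∧ ∀ t, 0 ≤ V t := by
  obtain ⟨B, hB⟩ := hKb
  have hB0 : 0 ≤ B := le_trans (abs_nonneg _) (hB 0)
  obtain ⟨C, hC0, hC⟩ := hbound 1 one_pos
  -- continuity of each Uₙ on its domain
  have hUcont : ∀ n t, tseq n < t → ContinuousAt (U n) t :=
    fun n t ht => (hU n t ht).continuousAt
  -- uniqueness: two solutions agreeing somewhere agree everywhere (in common domain)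
  have huniq : ∀ n m s t, tseq n < s → tseq m < s → tseq n < t → tseq m < t →
      U n s = U m s → U n t = U m t := by
    intro n m s t hns hms hnt hmt heq
    set a0 : ℝ := max (tseq n) (tseq m) with ha0
    set p : ℝ := min s t with hp
    have ha0p : a0 < p := by
      simp only [ha0, hp, max_lt_iff, lt_min_iff]
      exact ⟨⟨hns, hms⟩, ⟨hnt, hmt⟩⟩
    set a : ℝ := (a0 + p) / 2 with ha
    have haa0 : a0 < a := by rw [ha]; linarith
    have hap : a < p := by rw [ha]; linarith
    set b : ℝ := max s t + 1 with hb'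
    obtain ⟨C', hC'0, hC'⟩ := hbound (a - a0) (by linarith)
    have hmem : ∀ j, tseq j ≤ a0 → ∀ τ, τ ∈ Ioo a b → U j τ ∈ Icc (-C') C' := by
      intro j hj τ hτ
      have : tseq j + (a - a0) ≤ τ := by
        have := hτ.1; linarith
      have := hC' j τ this
      rw [abs_lt] at this
      exact ⟨le_of_lt this.1, le_of_lt this.2⟩
    have hdom : ∀ j, tseq j ≤ a0 → ∀ τ, τ ∈ Ioo a b → tseq j < τ := by
      intro j hj τ hτ
      exact lt_of_le_of_lt (le_trans hj (le_of_lt haa0)) hτ.1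
    have hEq : Set.EqOn (U n) (U m) (Ioo a b) := by
      apply ODE_solution_unique_of_mem_Ioo
        (v := fun τ x => -x ^ 2 - K τ) (s := fun _ => Icc (-C') C')
        (K := Real.toNNReal (2 * C'))
        (fun τ _ => my_riccati_lipschitz K C' (le_of_lt hC'0) τ)
        (t₀ := s)
      · constructor
        · exact lt_of_lt_of_le hap (min_le_left s t)
        · rw [hb']; exact lt_of_le_of_lt (le_max_left s t) (by linarith)
      · intro τ hτ
        exact ⟨hU n τ (hdom n (le_max_left _ _) τ hτ), hmem n (le_max_left _ _) τ hτ⟩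
      · intro τ hτ
        exact ⟨hU m τ (hdom m (le_max_right _ _) τ hτ), hmem m (le_max_right _ _) τ hτ⟩
      · exact heq
    apply hEq
    constructor
    · exact lt_of_lt_of_le hap (min_le_right s t)
    · rw [hb']; exact lt_of_le_of_lt (le_max_right s t) (by linarith)
  -- comparison: solutions cannot cross
  have hcomp : ∀ n m (t : ℝ), tseq n < 0 → tseq m < 0 → tseq n < t → tseq m < t →
      U n 0 ≤ U m 0 → U n t ≤ U m t := by
    intro n m t hn0 hm0 hnt hmt h0
    by_contra hlt
    push_neg at hlt
    -- IVT gives a crossing point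
    have hsub : uIcc (0:ℝ) t ⊆ Ioi (max (tseq n) (tseq m)) := by
      intro τ hτ
      have h1 : min (0:ℝ) t ≤ τ := hτ.1
      have h2 : max (tseq n) (tseq m) < min (0:ℝ) t := by
        simp only [max_lt_iff, lt_min_iff]
        exact ⟨⟨hn0, hm0⟩, ⟨hnt, hmt⟩⟩
      exact lt_of_lt_of_le h2 h1
    have hcont : ContinuousOn (fun τ => U n τ - U m τ) (uIcc 0 t) := by
      intro τ hτ
      have hτ' := hsub hτ
      simp only [mem_Ioi, max_lt_iff] at hτ'
      exact (((hUcont n τ hτ'.1).sub (hUcont m τ hτ'.2)).continuousWithinAt)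
    have hivt := intermediate_value_uIcc hcont
    have h0' : (0:ℝ) ∈ uIcc (U n 0 - U m 0) (U n t - U m t) := by
      rw [Set.mem_uIcc]
      left
      constructor
      · linarith
      · linarith
    obtain ⟨τ, hτmem, hτeq⟩ := hivt h0'
    have hτ' := hsub hτmem
    simp only [mem_Ioi, max_lt_iff] at hτ'
    have heqτ : U n τ = U m τ := by simpa [sub_eq_zero] using hτeq
    have := huniq n m τ t hτ'.1 hτ'.2 hnt hmt heqτ
    linarith
  -- extract a subsequence going to -∞ fast
  obtain ⟨ψ, hψmono, hψ⟩ := Filter.extraction_forall_of_eventually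
    (P := fun j k => tseq k ≤ -(j:ℝ) - 1)
    (fun j => htseq.eventually (eventually_le_atBot (-(j:ℝ) - 1)))
  -- extract a monotone subsequence of values at 0
  obtain ⟨φ, hφmono, hφcase⟩ := my_exists_monotone_subseq (fun j => U (ψ j) 0)
  set σ : ℕ → ℕ := ψ ∘ φ with hσdef
  have hσ : ∀ k, tseq (σ k) ≤ -(k:ℝ) - 1 := by
    intro k
    calc tseq (σ k) ≤ -(φ k : ℝ) - 1 := hψ (φ k)
      _ ≤ -(k:ℝ) - 1 := by
          have : (k:ℝ) ≤ (φ k : ℝ) := Nat.cast_le.mpr (hφmono.le_apply)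
          linarith
  have hσdom : ∀ (k : ℕ) (t : ℝ), -(k:ℝ) ≤ t → tseq (σ k) < t := by
    intro k t ht
    calc tseq (σ k) ≤ -(k:ℝ) - 1 := hσ k
      _ < -(k:ℝ) := by linarith
      _ ≤ t := ht
  have hσbd : ∀ (k : ℕ) (t : ℝ), -(k:ℝ) ≤ t → |U (σ k) t| < C := by
    intro k t ht
    apply hC
    have := hσ k; linarith
  have hσ0 : ∀ k : ℕ, tseq (σ k) < 0 := fun k => hσdom k 0 (by simp)
  -- monotone order of values at 0, in both cases
  have hmono0 : (∀ k l : ℕ, k ≤ l → U (σ k) 0 ≤ U (σ l) 0) ∨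
      (∀ k l : ℕ, k ≤ l → U (σ l) 0 ≤ U (σ k) 0) := by
    rcases hφcase with h | h
    · exact Or.inl (fun k l hkl => h hkl)
    · exact Or.inr (fun k l hkl => h hkl)
  -- pointwise convergence
  have key : ∀ t : ℝ, ∃ L : ℝ, Tendsto (fun k => U (σ k) t) atTop (𝓝 L) := by
    intro t
    set Kt : ℕ := ⌈|t|⌉₊ with hKtdef
    have hKtt : ∀ k : ℕ, -((k + Kt : ℕ) : ℝ) ≤ t := by
      intro k
      have h1 : |t| ≤ ((k + Kt : ℕ) : ℝ) := by
        push_cast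
        have h2 : |t| ≤ (Kt : ℝ) := Nat.le_ceil _
        have h3 : (0:ℝ) ≤ (k:ℝ) := Nat.cast_nonneg _
        linarith
      have := neg_abs_le t
      linarith
    set g : ℕ → ℝ := fun k => U (σ (k + Kt)) t with hgdef
    have hgbd : ∀ k, |g k| < C := fun k => hσbd _ t (hKtt k)
    have hord : ∀ k l : ℕ, U (σ (k+Kt)) 0 ≤ U (σ (l+Kt)) 0 → g k ≤ g l := by
      intro k l h0
      exact hcomp (σ (k+Kt)) (σ (l+Kt)) t (hσ0 _) (hσ0 _)
        (hσdom _ t (hKtt k)) (hσdom _ t (hKtt l)) h0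
    have hconv : ∃ L : ℝ, Tendsto g atTop (𝓝 L) := by
      rcases hmono0 with h | h
      · have hmg : Monotone g := fun k l hkl =>
          hord k l (h _ _ (Nat.add_le_add_right hkl Kt))
        have hbdd : BddAbove (Set.range g) := by
          refine ⟨C, ?_⟩
          rintro x ⟨k, rfl⟩
          exact le_of_lt (abs_lt.mp (hgbd k)).2
        exact ⟨_, tendsto_atTop_ciSup hmg hbdd⟩
      · have hmg : Antitone g := fun k l hkl =>
          hord l k (h _ _ (Nat.add_le_add_right hkl Kt))
        have hbdd : BddBelow (Set.range g) := by
          refine ⟨-C, ?_⟩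
          rintro x ⟨k, rfl⟩
          exact le_of_lt (abs_lt.mp (hgbd k)).1
        exact ⟨_, tendsto_atTop_ciInf hmg hbdd⟩
    obtain ⟨L, hL⟩ := hconv
    exact ⟨L, (tendsto_add_atTop_iff_nat Kt).mp hL⟩
  choose V hV using key
  have hev : ∀ t : ℝ, ∀ᶠ k : ℕ in atTop, -(k:ℝ) ≤ t := by
    intro t
    filter_upwards [eventually_ge_atTop ⌈|t|⌉₊] with k hk
    have h1 : |t| ≤ (k:ℝ) := le_trans (Nat.le_ceil _) (Nat.cast_le.mpr hk)
    have := neg_abs_le t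
    linarith
  have hVbd : ∀ t, |V t| ≤ C := by
    intro t
    apply le_of_tendsto (hV t).abs
    filter_upwards [hev t] with k hk
    exact le_of_lt (hσbd k t hk)
  have hVpos : ∀ t, 0 ≤ V t := by
    intro t
    apply ge_of_tendsto (hV t)
    filter_upwards [hev t] with k hk
    exact le_of_lt (hUpos _ t (hσdom k t hk))
  -- the integral identity for V
  have hint : ∀ s t : ℝ, V t - V s = ∫ τ in s..t, (-(V τ) ^ 2 - K τ) := by
    intro s t
    have hevst : ∀ᶠ k : ℕ in atTop, ∀ τ ∈ uIcc s t, -(k:ℝ) ≤ τ := by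
      filter_upwards [hev (min s t)] with k hk τ hτ
      exact le_trans hk hτ.1
    have hFTC : ∀ᶠ k : ℕ in atTop,
        U (σ k) t - U (σ k) s = ∫ τ in s..t, (-(U (σ k) τ) ^ 2 - K τ) := by
      filter_upwards [hevst] with k hk
      symm
      apply intervalIntegral.integral_eq_sub_of_hasDerivAt
      · intro τ hτ
        exact hU _ τ (hσdom k τ (hk τ hτ))
      · apply ContinuousOn.intervalIntegrable
        intro τ hτ
        exact (((hUcont _ τ (hσdom k τ (hk τ hτ))).pow 2).neg.sub
          hKc.continuousAt).continuousWithinAt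
    have hlim : Tendsto (fun k => ∫ τ in s..t, (-(U (σ k) τ) ^ 2 - K τ)) atTop
        (𝓝 (∫ τ in s..t, (-(V τ) ^ 2 - K τ))) := by
      apply intervalIntegral.tendsto_integral_filter_of_dominated_convergence
        (bound := fun _ => C ^ 2 + B)
      · filter_upwards [hevst] with k hk
        apply ContinuousOn.aestronglyMeasurable _ measurableSet_uIoc
        intro τ hτ
        exact (((hUcont _ τ (hσdom k τ (hk τ (uIoc_subset_uIcc hτ)))).pow 2).neg.sub
          hKc.continuousAt).continuousWithinAt
      · filter_upwards [hevst] with k hk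
        apply ae_of_all
        intro τ hτ
        have h1 : |U (σ k) τ| ≤ C := le_of_lt (hσbd k τ (hk τ (uIoc_subset_uIcc hτ)))
        have h2 : |K τ| ≤ B := hB τ
        rw [Real.norm_eq_abs]
        calc |-(U (σ k) τ) ^ 2 - K τ| ≤ |(-(U (σ k) τ) ^ 2)| + |K τ| := abs_sub _ _
          _ ≤ C ^ 2 + B := by
              have h3 : |(-(U (σ k) τ) ^ 2)| = |U (σ k) τ| ^ 2 := by
                rw [abs_neg, abs_pow]
              have h4 : |U (σ k) τ| ^ 2 ≤ C ^ 2 :=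
                pow_le_pow_left₀ (abs_nonneg _) h1 2
              linarith
      · exact intervalIntegrable_const
      · apply ae_of_all
        intro τ _
        exact (((hV τ).pow 2).neg).sub tendsto_const_nhds
    have h2 : Tendsto (fun k => U (σ k) t - U (σ k) s) atTop (𝓝 (V t - V s)) :=
      (hV t).sub (hV s)
    exact tendsto_nhds_unique (h2.congr' hFTC) hlim
  -- V is Lipschitz, hence continuous
  have hVcont : Continuous V := by
    have hlip : LipschitzWith (Real.toNNReal (C ^ 2 + B)) V := by
      apply LipschitzWith.of_dist_le_mul
      intro x y
      rw [Real.dist_eq, Real.dist_eq, Real.coe_toNNReal _ (by positivity)]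
      have h1 : V x - V y = ∫ τ in y..x, (-(V τ) ^ 2 - K τ) := hint y x
      rw [h1]
      have h2 : ∀ τ ∈ Set.uIoc y x, ‖-(V τ) ^ 2 - K τ‖ ≤ C ^ 2 + B := by
        intro τ _
        have hVτ : |V τ| ≤ C := hVbd τ
        rw [Real.norm_eq_abs]
        calc |-(V τ) ^ 2 - K τ| ≤ |(-(V τ) ^ 2)| + |K τ| := abs_sub _ _
          _ ≤ C ^ 2 + B := by
              have h3 : |(-(V τ) ^ 2)| = |V τ| ^ 2 := by rw [abs_neg, abs_pow]
              have h4 : |V τ| ^ 2 ≤ C ^ 2 := pow_le_pow_left₀ (abs_nonneg _) hVτ 2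
              linarith [hB τ]
      have := intervalIntegral.norm_integral_le_of_norm_le_const h2
      rwa [Real.norm_eq_abs] at this
    exact hlip.continuous
  have hfcont : Continuous (fun τ => -(V τ) ^ 2 - K τ) := ((hVcont.pow 2).neg).sub hKc
  refine ⟨V, ?_, hVpos⟩
  intro t
  have hprim : HasDerivAt (fun x => V 0 + ∫ τ in (0:ℝ)..x, (-(V τ) ^ 2 - K τ))
      (-(V t) ^ 2 - K t) t := by
    apply HasDerivAt.const_add
    exact intervalIntegral.integral_hasDerivAt_right
      (hfcont.intervalIntegrable _ _)
      (hfcont.stronglyMeasurableAtFilter _ _)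
      hfcont.continuousAt
  apply hprim.congr_of_eventuallyEq
  apply Filter.Eventually.of_forall
  intro x
  show V x = V 0 + ∫ τ in (0:ℝ)..x, (-(V τ) ^ 2 - K τ)
  have := hint 0 x
  linarith
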